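/- Let a > 0 and let k : [0, ∞) → ℝ be continuous with k(s) ≤ −a² for all s, let F be the solution of F'' + kF = 0 with F(0) = 0, F'(0) = 1, and define g(r) = exp(−∫ᵣ^∞ dt/F(t)) for r > 0. Then g is differentiable on (0, ∞) with g'(r) = g(r)/F(r) > 0, and g'(r) converges as r → 0⁺ to the positive limit c = lim_{r→0⁺} g(r)/r; in particular g extends to a C¹ function on [0, ∞) with g(0) = 0 and g'(0) = c > 0. -/

import Mathlib

open Set Real Filter Topology MeasureTheory

/-- Further properties of `g(r) = exp(-∫ᵣ^∞ dt/F(t))` from Lemma 5: `g` is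
differentiable on `(0,∞)` with `g'(r) = g(r)/F(r) > 0`; moreover `g'(r)` converges,
as `r → 0⁺`, to the positive limit `c = lim_{r→0⁺} g(r)/r`, so that `g` extends to a
`C¹` function on `[0,∞)` with `g(0) = 0` and `g'(0) = c > 0`. -/
theorem stmt_12 (a : ℝ) (ha : 0 < a) (k F F' F'' : ℝ → ℝ)
    (hk_cont : ContinuousOn k (Set.Ici 0))
    (hk_le : ∀ s ∈ Set.Ici (0 : ℝ), k s ≤ -a ^ 2)
    (hF' : ∀ s ∈ Set.Ici (0 : ℝ), HasDerivWithinAt F (F' s) (Set.Ici 0) s)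
    (hF'' : ∀ s ∈ Set.Ici (0 : ℝ), HasDerivWithinAt F' (F'' s) (Set.Ici 0) s)
    (hF''_cont : ContinuousOn F'' (Set.Ici 0))
    (hODE : ∀ s ∈ Set.Ici (0 : ℝ), F'' s + k s * F s = 0)
    (hF0 : F 0 = 0) (hF'0 : F' 0 = 1)
    (g : ℝ → ℝ) (hg : ∀ r > (0 : ℝ), g r = Real.exp (-∫ t in Set.Ioi r, 1 / F t)) :
    (∀ r > (0 : ℝ), HasDerivAt g (g r / F r) r ∧ 0 < g r / F r) ∧
      ∃ c : ℝ, 0 < c ∧ Tendsto (fun r => g r / r) (𝓝[>] 0) (𝓝 c) ∧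
        Tendsto (fun r => g r / F r) (𝓝[>] 0) (𝓝 c) ∧
        ∃ gext : ℝ → ℝ, Set.EqOn gext g (Set.Ioi 0) ∧ gext 0 = 0 ∧
          ContDiffOn ℝ 1 gext (Set.Ici 0) ∧ derivWithin gext (Set.Ici 0) 0 = c := by
  have hFcont : ContinuousOn F (Ici 0) := fun s hs => (hF' s hs).continuousWithinAt
  have hF'cont : ContinuousOn F' (Ici 0) := fun s hs => (hF'' s hs).continuousWithinAt
  -- upgrade derivatives to true derivatives at interior points
  have hFd : ∀ t : ℝ, 0 < t → HasDerivAt F (F' t) t := fun t ht =>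
    (hF' t (le_of_lt ht)).hasDerivAt (Ici_mem_nhds ht)
  have hF'd : ∀ t : ℝ, 0 < t → HasDerivAt F' (F'' t) t := fun t ht =>
    (hF'' t (le_of_lt ht)).hasDerivAt (Ici_mem_nhds ht)
  -- Step 1: 1 ≤ F' and id ≤ F on [0, ∞)
  have key : ∀ s : ℝ, 0 ≤ s → 1 ≤ F' s ∧ s ≤ F s := by
    set S : Set ℝ := {t | 1 ≤ F' t ∧ t ≤ F t} with hS
    have prop : ∀ x : ℝ, 0 ≤ x → x ∈ S → ∃ δ > 0, Icc x (x + δ) ⊆ S := by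
      intro x hx hxS
      have hev : ∀ᶠ t in 𝓝[Ici 0] x, (1:ℝ)/2 < F' t :=
        (hF'cont x hx).eventually (eventually_gt_nhds (by linarith [hxS.1]))
      obtain ⟨ε, hε, hball⟩ := Metric.mem_nhdsWithin_iff.1 hev
      refine ⟨ε/2, by positivity, ?_⟩
      set δ := ε/2 with hδdef
      have hδε : δ < ε := by simp only [hδdef]; linarith
      have hsub : Icc x (x + δ) ⊆ Ici (0:ℝ) := fun t ht => le_trans hx ht.1
      have hhalf : ∀ t ∈ Icc x (x + δ), (1:ℝ)/2 ≤ F' t := by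
        intro t ht
        have hd : dist t x < ε := by
          rw [Real.dist_eq, abs_lt]
          constructor <;> [linarith [ht.1]; linarith [ht.2]]
        exact le_of_lt (hball ⟨Metric.mem_ball.2 hd, hsub ht⟩)
      -- F is nonnegative on the interval
      have hFlow : ∀ t ∈ Icc x (x + δ), F x + (t - x)/2 ≤ F t := by
        have hmono : MonotoneOn (fun t => F t - t/2) (Icc x (x + δ)) := by
          apply monotoneOn_of_deriv_nonneg (convex_Icc _ _)
          · exact (hFcont.mono hsub).sub (continuousOn_id.div_const 2)
          · intro t ht
            rw [interior_Icc] at ht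
            have ht0 : 0 < t := lt_of_le_of_lt hx ht.1
            have hd : HasDerivAt (fun u : ℝ => F u - u / 2) (F' t - 1/2) t := by
              exact ((hFd t ht0).sub ((hasDerivAt_id t).div_const 2)).congr_deriv (by norm_num)
            exact hd.differentiableAt.differentiableWithinAt
          · intro t ht
            rw [interior_Icc] at ht
            have ht0 : 0 < t := lt_of_le_of_lt hx ht.1
            have hd : HasDerivAt (fun u : ℝ => F u - u / 2) (F' t - 1/2) t := by
              exact ((hFd t ht0).sub ((hasDerivAt_id t).div_const 2)).congr_deriv (by norm_num)
            rw [hd.deriv]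
            have := hhalf t (Ioo_subset_Icc_self ht)
            linarith
        intro t ht
        have := hmono (left_mem_Icc.2 (by linarith [ht.2, ht.1])) ht ht.1
        simp only at this
        linarith
      have hFnn : ∀ t ∈ Icc x (x + δ), 0 ≤ F t := by
        intro t ht
        have := hFlow t ht
        have : x + (t - x)/2 ≤ F t := by linarith [hxS.2]
        linarith [ht.1, hx]
      -- F' is monotone on the interval
      have hF'mono : MonotoneOn F' (Icc x (x + δ)) := by
        apply monotoneOn_of_deriv_nonneg (convex_Icc _ _)
        · exact hF'cont.mono hsub
        · intro t ht
          rw [interior_Icc] at ht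
          have ht0 : 0 < t := lt_of_le_of_lt hx ht.1
          exact (hF'd t ht0).differentiableAt.differentiableWithinAt
        · intro t ht
          rw [interior_Icc] at ht
          have ht0 : 0 < t := lt_of_le_of_lt hx ht.1
          rw [(hF'd t ht0).deriv]
          have hode := hODE t (le_of_lt ht0)
          have hk := hk_le t (le_of_lt ht0)
          have hFt := hFnn t (Ioo_subset_Icc_self ht)
          nlinarith
      have hF'ge : ∀ t ∈ Icc x (x + δ), 1 ≤ F' t := by
        intro t ht
        exact le_trans hxS.1 (hF'mono (left_mem_Icc.2 (by linarith [ht.1, ht.2])) ht ht.1)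
      -- F t - t is monotone on the interval
      have hwmono : MonotoneOn (fun t => F t - t) (Icc x (x + δ)) := by
        apply monotoneOn_of_deriv_nonneg (convex_Icc _ _)
        · exact (hFcont.mono hsub).sub continuousOn_id
        · intro t ht
          rw [interior_Icc] at ht
          have ht0 : 0 < t := lt_of_le_of_lt hx ht.1
          have hd : HasDerivAt (fun u : ℝ => F u - u) (F' t - 1) t := by
            exact (hFd t ht0).sub (hasDerivAt_id t)
          exact hd.differentiableAt.differentiableWithinAt
        · intro t ht
          rw [interior_Icc] at ht
          have ht0 : 0 < t := lt_of_le_of_lt hx ht.1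
          have hd : HasDerivAt (fun u : ℝ => F u - u) (F' t - 1) t := by
            exact (hFd t ht0).sub (hasDerivAt_id t)
          rw [hd.deriv]
          linarith [hF'ge t (Ioo_subset_Icc_self ht)]
      intro t ht
      refine ⟨hF'ge t ht, ?_⟩
      have := hwmono (left_mem_Icc.2 (by linarith [ht.1, ht.2])) ht ht.1
      simp only at this
      linarith [hxS.2]
    intro s hs
    have h0S : (0:ℝ) ∈ S := ⟨le_of_eq hF'0.symm, le_of_eq hF0.symm⟩
    have : Icc (0:ℝ) s ⊆ S := by
      apply IsClosed.Icc_subset_of_forall_exists_gt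
      · have h1 : IsClosed (Icc (0:ℝ) s ∩ F' ⁻¹' Ici 1) :=
          (hF'cont.mono (Icc_subset_Ici_self)).preimage_isClosed_of_isClosed isClosed_Icc isClosed_Ici
        have h2 : IsClosed (Icc (0:ℝ) s ∩ (fun t => F t - t) ⁻¹' Ici 0) :=
          (((hFcont.mono (Icc_subset_Ici_self)).sub continuousOn_id)).preimage_isClosed_of_isClosed
            isClosed_Icc isClosed_Ici
        have : S ∩ Icc 0 s = (Icc (0:ℝ) s ∩ F' ⁻¹' Ici 1) ∩ (Icc (0:ℝ) s ∩ (fun t => F t - t) ⁻¹' Ici 0) := by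
          ext t
          simp only [hS, mem_inter_iff, mem_setOf_eq, mem_preimage, mem_Ici, sub_nonneg]
          tauto
        rw [this]
        exact h1.inter h2
      · exact h0S
      · rintro x ⟨hxS, hx0, hxs⟩ y hy
        obtain ⟨δ, hδ, hsub⟩ := prop x hx0 hxS
        refine ⟨min (x + δ) y, hsub ⟨le_min (by linarith) (le_of_lt hy), min_le_left _ _⟩,
          lt_min (by linarith) hy, min_le_right _ _⟩
    exact this ⟨hs, le_refl s⟩
  have hF'ge1 : ∀ s : ℝ, 0 ≤ s → 1 ≤ F' s := fun s hs => (key s hs).1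
  have hFge : ∀ s : ℝ, 0 ≤ s → s ≤ F s := fun s hs => (key s hs).2
  have hFnn : ∀ s : ℝ, 0 ≤ s → 0 ≤ F s := fun s hs => le_trans hs (hFge s hs)
  have hFpos : ∀ s : ℝ, 0 < s → 0 < F s := fun s hs => lt_of_lt_of_le hs (hFge s (le_of_lt hs))
  have hF''ge : ∀ s : ℝ, 0 ≤ s → a ^ 2 * F s ≤ F'' s := by
    intro s hs
    have hode := hODE s hs
    have hk := hk_le s hs
    nlinarith [hFnn s hs]
  -- Step 2: a * F ≤ F' on [0, ∞)
  have haF : ∀ s : ℝ, 0 ≤ s → a * F s ≤ F' s := by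
    have hmono : MonotoneOn (fun s => F' s ^ 2 - a ^ 2 * F s ^ 2) (Ici 0) := by
      apply monotoneOn_of_deriv_nonneg (convex_Ici 0)
      · exact (hF'cont.pow 2).sub (continuousOn_const.mul (hFcont.pow 2))
      · intro t ht
        rw [interior_Ici] at ht
        exact (((hF'd t ht).pow 2).sub (((hFd t ht).pow 2).const_mul _)).differentiableAt.differentiableWithinAt
      · intro t ht
        rw [interior_Ici] at ht
        rw [HasDerivAt.deriv (f := fun s => F' s ^ 2 - a ^ 2 * F s ^ 2)
          (((hF'd t ht).pow 2).sub (((hFd t ht).pow 2).const_mul _))]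
        have h1 := hF''ge t (le_of_lt ht)
        have h2 := hF'ge1 t (le_of_lt ht)
        have h3 := hFnn t (le_of_lt ht)
        have h4 : 0 ≤ (F'' t - a ^ 2 * F t) * F' t :=
          mul_nonneg (sub_nonneg.2 h1) (le_trans zero_le_one h2)
        norm_num
        nlinarith [h4]
    intro s hs
    have := hmono (self_mem_Ici) hs hs
    simp only [hF0, hF'0] at this
    norm_num at this
    have h2 := hF'ge1 s hs
    have h3 := hFnn s hs
    have h4 : 0 < F' s + a * F s := by nlinarith
    nlinarith [h4]
  -- Step 3: exponential growth : for s ≥ 1, exp (a*s - a) ≤ F s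
  have hgrow : ∀ s : ℝ, 1 ≤ s → Real.exp (a * s - a) ≤ F s := by
    have hmono : MonotoneOn (fun s => F s * Real.exp (-(a * s))) (Ici 0) := by
      apply monotoneOn_of_deriv_nonneg (convex_Ici 0)
      · exact hFcont.mul (Real.continuous_exp.comp (continuous_const.mul continuous_id).neg).continuousOn
      · intro t ht
        rw [interior_Ici] at ht
        have h₁ : HasDerivAt (fun s : ℝ => -(a * s)) (-a) t := by
          exact ((hasDerivAt_id t).const_mul a).neg.congr_deriv (by ring)
        exact ((hFd t ht).mul h₁.exp).differentiableAt.differentiableWithinAt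
      · intro t ht
        rw [interior_Ici] at ht
        have h₁ : HasDerivAt (fun s : ℝ => -(a * s)) (-a) t := by
          exact ((hasDerivAt_id t).const_mul a).neg.congr_deriv (by ring)
        rw [HasDerivAt.deriv (f := fun s => F s * Real.exp (-(a * s))) ((hFd t ht).mul h₁.exp)]
        have h1 := haF t (le_of_lt ht)
        have h2 := Real.exp_pos (-(a * t))
        nlinarith
    intro s hs
    have h1 : F 1 * Real.exp (-(a * 1)) ≤ F s * Real.exp (-(a * s)) :=
      hmono (mem_Ici.2 zero_le_one) (mem_Ici.2 (by linarith)) hs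
    have h2 : (1:ℝ) ≤ F 1 := hFge 1 (by norm_num)
    have h3 : Real.exp (-(a * 1)) ≤ F s * Real.exp (-(a * s)) := by
      calc Real.exp (-(a*1)) = 1 * Real.exp (-(a*1)) := (one_mul _).symm
        _ ≤ F 1 * Real.exp (-(a * 1)) := by
            exact mul_le_mul_of_nonneg_right h2 (le_of_lt (Real.exp_pos _))
        _ ≤ _ := h1
    have := mul_le_mul_of_nonneg_right h3 (le_of_lt (Real.exp_pos (a * s)))
    rw [mul_assoc, ← Real.exp_add, ← Real.exp_add] at this
    simp only [neg_add_cancel, Real.exp_zero, mul_one] at this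
    have heq : a * s - a = -a + a * s := by ring
    rw [heq]
    exact this
  -- continuity of 1/F on (0,∞)
  have hcont1F : ContinuousOn (fun t => 1 / F t) (Ioi 0) := by
    apply ContinuousOn.div continuousOn_const (hFcont.mono Ioi_subset_Ici_self)
    exact fun t ht => ne_of_gt (hFpos t ht)
  -- Step 4: integrability
  have hInt : ∀ r : ℝ, 0 < r → IntegrableOn (fun t => 1 / F t) (Ioi r) := by
    intro r hr
    set M : ℝ := max r 1 with hM
    have hrM : r ≤ M := le_max_left _ _
    have h1M : (1:ℝ) ≤ M := le_max_right _ _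
    have hIoc : IntegrableOn (fun t => 1 / F t) (Ioc r M) := by
      apply (ContinuousOn.integrableOn_Icc ?_).mono_set Ioc_subset_Icc_self
      exact hcont1F.mono (fun t ht => lt_of_lt_of_le hr ht.1)
    have hIoi : IntegrableOn (fun t => 1 / F t) (Ioi M) := by
      have hmeas : AEStronglyMeasurable (fun t => 1 / F t) (volume.restrict (Ioi M)) :=
        (hcont1F.mono (fun t ht => lt_of_lt_of_le (lt_of_lt_of_le hr hrM) (le_of_lt ht))).aestronglyMeasurable
          measurableSet_Ioi
      have hbound : IntegrableOn (fun t => Real.exp a * Real.exp (-a * t)) (Ioi M) :=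
        (exp_neg_integrableOn_Ioi M ha).const_mul _
      apply hbound.mono' hmeas
      rw [ae_restrict_iff' measurableSet_Ioi]
      apply ae_of_all
      intro t ht
      have ht1 : (1:ℝ) ≤ t := le_trans h1M (le_of_lt ht)
      have hFt : Real.exp (a * t - a) ≤ F t := hgrow t ht1
      have hFtpos : 0 < F t := hFpos t (by linarith)
      rw [Real.norm_of_nonneg (by positivity)]
      have : 1 / F t ≤ 1 / Real.exp (a * t - a) :=
        one_div_le_one_div_of_le (Real.exp_pos _) hFt
      calc 1 / F t ≤ 1 / Real.exp (a * t - a) := this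
        _ = Real.exp a * Real.exp (-a * t) := by
            rw [one_div, ← Real.exp_neg, ← Real.exp_add]; ring_nf
    have := hIoc.union hIoi
    rwa [Ioc_union_Ioi_eq_Ioi hrM] at this
  -- the integral function
  set I : ℝ → ℝ := fun x => ∫ t in Ioi x, 1 / F t with hI
  -- Step 5: derivative of I
  have hIderiv : ∀ r : ℝ, 0 < r → HasDerivAt I (-(1 / F r)) r := by
    intro r hr
    set b : ℝ := r / 2 with hb
    have hb0 : 0 < b := by positivity
    have hbr : b < r := by simp only [hb]; linarith
    have hsplit : ∀ x : ℝ, b < x → I x = I b - ∫ t in b..x, 1 / F t := by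
      intro x hx
      have hu : Ioc b x ∪ Ioi x = Ioi b := Ioc_union_Ioi_eq_Ioi (le_of_lt hx)
      have h1 : IntegrableOn (fun t => 1 / F t) (Ioc b x) :=
        (hInt b hb0).mono_set (fun t ht => ht.1)
      have h2 : IntegrableOn (fun t => 1 / F t) (Ioi x) :=
        (hInt b hb0).mono_set (fun t ht => lt_trans hx ht)
      have := setIntegral_union (Ioc_disjoint_Ioi le_rfl) measurableSet_Ioi h1 h2 (f := fun t => 1 / F t) (μ := volume)
      rw [hu] at this
      rw [intervalIntegral.integral_of_le (le_of_lt hx)]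
      show (∫ t in Ioi x, 1 / F t) = (∫ t in Ioi b, 1 / F t) - ∫ t in Ioc b x, 1 / F t
      linarith [this]
    have hev : (fun x => I b - ∫ t in b..x, 1 / F t) =ᶠ[𝓝 r] I := by
      filter_upwards [isOpen_Ioi.mem_nhds hbr] with x hx
      exact (hsplit x hx).symm
    have hii : IntervalIntegrable (fun t => 1 / F t) volume b r := by
      rw [intervalIntegrable_iff_integrableOn_Ioc_of_le (le_of_lt hbr)]
      exact (hInt b hb0).mono_set (fun t ht => ht.1)
    have hmeas : StronglyMeasurableAtFilter (fun t => 1 / F t) (𝓝 r) volume :=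
      hcont1F.stronglyMeasurableAtFilter isOpen_Ioi r hr
    have hct : ContinuousAt (fun t => 1 / F t) r :=
      hcont1F.continuousAt (isOpen_Ioi.mem_nhds hr)
    have hd : HasDerivAt (fun x => I b - ∫ t in b..x, 1 / F t) (-(1 / F r)) r :=
      (intervalIntegral.integral_hasDerivAt_right hii hmeas hct).const_sub (I b)
    exact hd.congr_of_eventuallyEq hev.symm
  have hgpos : ∀ r : ℝ, 0 < r → 0 < g r := by
    intro r hr; rw [hg r hr]; exact Real.exp_pos _
  -- Step 6: derivative of g
  have hgderiv : ∀ r : ℝ, 0 < r → HasDerivAt g (g r / F r) r := by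
    intro r hr
    have hev : (fun x => Real.exp (-(I x))) =ᶠ[𝓝 r] g := by
      filter_upwards [isOpen_Ioi.mem_nhds hr] with x hx
      exact (hg x hx).symm
    have hd : HasDerivAt (fun x => Real.exp (-(I x))) (Real.exp (-(I r)) * (1 / F r)) r := by
      have := ((hIderiv r hr).neg).exp
      simpa using this
    have hd2 : HasDerivAt (fun x => Real.exp (-(I x))) (g r / F r) r := by
      convert hd using 1
      rw [hg r hr]
      ring
    exact hd2.congr_of_eventuallyEq hev.symm
  refine ⟨fun r hr => ⟨hgderiv r hr, div_pos (hgpos r hr) (hFpos r hr)⟩, ?_⟩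
  -- Step 7: the limit
  set ψ : ℝ → ℝ := fun r => -(I r) - Real.log (F r) with hψ
  have hψderiv : ∀ r : ℝ, 0 < r → HasDerivAt ψ ((1 - F' r) / F r) r := by
    intro r hr
    have h1 : HasDerivAt (fun x => -(I x)) (1 / F r) r := by
      exact (hIderiv r hr).neg.congr_deriv (by ring)
    have h2 : HasDerivAt (fun x => Real.log (F x)) (F' r / F r) r :=
      (hFd r hr).log (ne_of_gt (hFpos r hr))
    have h3 := h1.sub h2
    have heq : 1 / F r - F' r / F r = (1 - F' r) / F r := div_sub_div_same _ _ _
    rw [heq] at h3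
    exact h3
  have hψanti : AntitoneOn ψ (Ioi 0) := by
    apply antitoneOn_of_deriv_nonpos (convex_Ioi 0)
    · exact fun r hr => (hψderiv r hr).continuousAt.continuousWithinAt
    · intro r hr
      rw [interior_Ioi] at hr
      exact (hψderiv r hr).differentiableAt.differentiableWithinAt
    · intro r hr
      rw [interior_Ioi] at hr
      rw [(hψderiv r hr).deriv]
      apply div_nonpos_of_nonpos_of_nonneg
      · linarith [hF'ge1 r (le_of_lt hr)]
      · exact hFnn r (le_of_lt hr)
  -- bound on ψ near 0
  obtain ⟨M, hMb⟩ : ∃ M : ℝ, ∀ t ∈ Icc (0:ℝ) 1, ‖F'' t‖ ≤ M :=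
    (isCompact_Icc).exists_bound_of_continuousOn (hF''_cont.mono (fun t ht => ht.1))
  set M0 : ℝ := max M 0 with hM0
  have hM0nn : 0 ≤ M0 := le_max_right _ _
  have hF''le : ∀ t ∈ Icc (0:ℝ) 1, F'' t ≤ M0 := fun t ht =>
    le_trans (le_trans (le_abs_self _) (hMb t ht)) (le_max_left _ _)
  have hF'le : ∀ t ∈ Icc (0:ℝ) 1, F' t ≤ 1 + M0 * t := by
    have hmono : MonotoneOn (fun t => 1 + M0 * t - F' t) (Icc (0:ℝ) 1) := by
      apply monotoneOn_of_deriv_nonneg (convex_Icc _ _)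
      · exact (continuousOn_const.add (continuousOn_const.mul continuousOn_id)).sub
          (hF'cont.mono (fun t ht => ht.1))
      · intro t ht
        rw [interior_Icc] at ht
        have h₁ : HasDerivAt (fun u : ℝ => 1 + M0 * u) M0 t := by
          simpa using ((hasDerivAt_id t).const_mul M0).const_add 1
        exact (h₁.sub (hF'd t ht.1)).differentiableAt.differentiableWithinAt
      · intro t ht
        rw [interior_Icc] at ht
        have h₁ : HasDerivAt (fun u : ℝ => 1 + M0 * u) M0 t := by
          simpa using ((hasDerivAt_id t).const_mul M0).const_add 1
        rw [HasDerivAt.deriv (f := fun t => 1 + M0 * t - F' t) (h₁.sub (hF'd t ht.1))]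
        linarith [hF''le t (Ioo_subset_Icc_self ht)]
    intro t ht
    have := hmono (left_mem_Icc.2 (by norm_num)) ht ht.1
    simp only [mul_zero, add_zero, hF'0] at this
    linarith
  -- ψ is bounded above on (0, 1]
  have hψbound : ∀ r : ℝ, 0 < r → ψ r ≤ ψ 1 + M0 := by
    have hmono : ∀ r : ℝ, 0 < r → r ≤ 1 → MonotoneOn (fun t => ψ t + M0 * t) (Icc r 1) := by
      intro r hr hr1
      apply monotoneOn_of_deriv_nonneg (convex_Icc _ _)
      · intro t ht
        have ht0 : 0 < t := lt_of_lt_of_le hr ht.1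
        exact ((hψderiv t ht0).add (by simpa using (hasDerivAt_id t).const_mul M0 :
          HasDerivAt (fun u : ℝ => M0 * u) M0 t)).continuousAt.continuousWithinAt
      · intro t ht
        rw [interior_Icc] at ht
        have h₁ : HasDerivAt (fun u : ℝ => M0 * u) M0 t := by
          simpa using (hasDerivAt_id t).const_mul M0
        exact ((hψderiv t (lt_trans hr ht.1)).add h₁).differentiableAt.differentiableWithinAt
      · intro t ht
        rw [interior_Icc] at ht
        have ht0 : 0 < t := lt_trans hr ht.1
        have h₁ : HasDerivAt (fun u : ℝ => M0 * u) M0 t := by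
          simpa using (hasDerivAt_id t).const_mul M0
        rw [HasDerivAt.deriv (f := fun t => ψ t + M0 * t) ((hψderiv t ht0).add h₁)]
        have h1 : F' t - 1 ≤ M0 * t := by
          have := hF'le t ⟨le_of_lt ht0, le_of_lt ht.2⟩
          linarith
        have h2 : t ≤ F t := hFge t (le_of_lt ht0)
        have h3 : 0 < F t := hFpos t ht0
        have h4 : F' t - 1 ≤ M0 * F t := le_trans h1 (by nlinarith)
        have h5 : (F' t - 1) / F t ≤ M0 := (div_le_iff₀ h3).2 (by linarith)
        have h6 : (1 - F' t) / F t = -((F' t - 1) / F t) := by ring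
        rw [h6]
        linarith
    intro r hr
    rcases le_or_gt r 1 with hr1 | hr1
    · have := hmono r hr hr1 (left_mem_Icc.2 hr1) (right_mem_Icc.2 hr1) hr1
      simp only [mul_one] at this
      nlinarith [mul_nonneg hM0nn (le_of_lt hr)]
    · have := hψanti (mem_Ioi.2 one_pos) (mem_Ioi.2 (lt_trans one_pos hr1)) (le_of_lt hr1)
      linarith
  have hne : (ψ '' Ioi 0).Nonempty := ⟨ψ 1, ⟨1, mem_Ioi.2 one_pos, rfl⟩⟩
  have hbdd : BddAbove (ψ '' Ioi 0) := by
    refine ⟨ψ 1 + M0, ?_⟩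
    rintro _ ⟨r, hr, rfl⟩
    exact hψbound r hr
  set L : ℝ := sSup (ψ '' Ioi 0) with hL
  have hψtend : Tendsto ψ (𝓝[>] 0) (𝓝 L) := by
    rw [tendsto_order]
    constructor
    · intro b hb
      obtain ⟨_, ⟨r₀, hr₀, rfl⟩, hbr₀⟩ := exists_lt_of_lt_csSup hne hb
      filter_upwards [Ioo_mem_nhdsGT hr₀] with r hr
      exact lt_of_lt_of_le hbr₀ (hψanti hr.1 hr₀ (le_of_lt hr.2))
    · intro b hb
      filter_upwards [self_mem_nhdsWithin] with r hr
      exact lt_of_le_of_lt (le_csSup hbdd ⟨r, hr, rfl⟩) hb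
  have hφψ : ∀ r : ℝ, 0 < r → g r / F r = Real.exp (ψ r) := by
    intro r hr
    rw [hg r hr]
    simp only [hψ]
    rw [Real.exp_sub, Real.exp_log (hFpos r hr)]
  have hφtend : Tendsto (fun r => g r / F r) (𝓝[>] 0) (𝓝 (Real.exp L)) := by
    have := (Real.continuous_exp.continuousAt.tendsto.comp hψtend)
    apply this.congr'
    filter_upwards [self_mem_nhdsWithin] with r hr
    exact (hφψ r hr).symm
  -- F r / r → 1
  have hFslope : Tendsto (fun r => F r / r) (𝓝[>] 0) (𝓝 1) := by
    have h := (hF' 0 self_mem_Ici)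
    rw [hasDerivWithinAt_iff_tendsto_slope] at h
    rw [Set.Ici_sdiff_left, hF'0] at h
    apply h.congr
    intro t
    rw [slope_def_field, hF0]
    simp [div_eq_mul_inv]
  have hgr : Tendsto (fun r => g r / r) (𝓝[>] 0) (𝓝 (Real.exp L)) := by
    have := hφtend.mul hFslope
    rw [mul_one] at this
    apply this.congr'
    filter_upwards [self_mem_nhdsWithin] with r hr
    rw [mem_Ioi] at hr
    have h1 : F r ≠ 0 := ne_of_gt (hFpos r hr)
    have h2 : r ≠ 0 := ne_of_gt hr
    field_simp
  -- g → 0 at 0⁺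
  have hgzero : Tendsto g (𝓝[>] 0) (𝓝 0) := by
    have hFtend : Tendsto F (𝓝[>] 0) (𝓝 0) := by
      have := (hFcont 0 self_mem_Ici).tendsto
      rw [hF0] at this
      exact this.mono_left (nhdsWithin_mono 0 Ioi_subset_Ici_self)
    have := hφtend.mul hFtend
    rw [mul_zero] at this
    apply this.congr'
    filter_upwards [self_mem_nhdsWithin] with r hr
    rw [mem_Ioi] at hr
    exact div_mul_cancel₀ _ (ne_of_gt (hFpos r hr))
  refine ⟨Real.exp L, Real.exp_pos L, hgr, hφtend, ?_⟩
  -- Step 8: the extension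
  set gext : ℝ → ℝ := fun r => if r ≤ 0 then 0 else g r with hgext
  have hEq : Set.EqOn gext g (Set.Ioi 0) := by
    intro r hr
    rw [mem_Ioi] at hr
    simp only [hgext, if_neg (not_le.2 hr)]
  have hgext0 : gext 0 = 0 := by simp [hgext]
  have hDW0 : HasDerivWithinAt gext (Real.exp L) (Ici 0) 0 := by
    rw [hasDerivWithinAt_iff_tendsto_slope, Set.Ici_sdiff_left]
    apply hgr.congr'
    filter_upwards [self_mem_nhdsWithin] with t ht
    rw [mem_Ioi] at ht
    rw [slope_def_field, hgext0, hEq (mem_Ioi.2 ht)]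
    simp [div_eq_mul_inv]
  have hgextd : ∀ r : ℝ, 0 < r → HasDerivAt gext (g r / F r) r := by
    intro r hr
    apply (hgderiv r hr).congr_of_eventuallyEq
    filter_upwards [isOpen_Ioi.mem_nhds hr] with x hx
    exact hEq hx
  have hdiff : DifferentiableOn ℝ gext (Ici 0) := by
    intro x hx
    rcases eq_or_lt_of_le (mem_Ici.1 hx) with h | h
    · subst h
      exact hDW0.differentiableWithinAt
    · exact (hgextd x h).differentiableAt.differentiableWithinAt
  have hdw0 : derivWithin gext (Ici 0) 0 = Real.exp L :=
    hDW0.derivWithin (uniqueDiffOn_Ici 0 0 self_mem_Ici)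
  have hdwr : ∀ r : ℝ, 0 < r → derivWithin gext (Ici 0) r = g r / F r := fun r hr =>
    (hgextd r hr).hasDerivWithinAt.derivWithin (uniqueDiffOn_Ici 0 r (le_of_lt hr))
  have hcontD : ContinuousOn (derivWithin gext (Ici 0)) (Ici 0) := by
    intro x hx
    rcases eq_or_lt_of_le (mem_Ici.1 hx) with h | h
    · subst h
      have hnhds : 𝓝[Ici (0:ℝ)] 0 = pure 0 ⊔ 𝓝[Ioi (0:ℝ)] 0 := by
        rw [← Set.Ioi_insert, nhdsWithin_insert]
      unfold ContinuousWithinAt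
      rw [hdw0, hnhds, tendsto_sup]
      constructor
      · have : Tendsto (derivWithin gext (Ici 0)) (pure (0:ℝ)) (𝓝 (derivWithin gext (Ici 0) 0)) :=
          tendsto_pure_nhds _ 0
        rwa [hdw0] at this
      · apply hφtend.congr'
        filter_upwards [self_mem_nhdsWithin] with r hr
        exact (hdwr r hr).symm
    · have hct : ContinuousAt (fun r => g r / F r) x := by
        apply ContinuousAt.div
        · exact (hgderiv x h).continuousAt
        · exact hFcont.continuousAt (Ici_mem_nhds h)
        · exact ne_of_gt (hFpos x h)
      have hev2 : (fun r => g r / F r) =ᶠ[𝓝 x] derivWithin gext (Ici 0) := by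
        filter_upwards [isOpen_Ioi.mem_nhds h] with y hy
        exact (hdwr y hy).symm
      have ht : Tendsto (derivWithin gext (Ici 0)) (𝓝 x) (𝓝 (g x / F x)) :=
        hct.tendsto.congr' hev2
      unfold ContinuousWithinAt
      rw [hdwr x h]
      exact ht.mono_left nhdsWithin_le_nhds
  have hCD : ContDiffOn ℝ 1 gext (Ici 0) := by
    rw [show (1 : WithTop ℕ∞) = 0 + 1 from rfl,
      contDiffOn_succ_iff_derivWithin (uniqueDiffOn_Ici 0)]
    refine ⟨hdiff, ?_, ?_⟩
    · intro h; exact absurd h (by simp)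
    · exact contDiffOn_zero.2 hcontD
  exact ⟨gext, hEq, hgext0, hCD, hdw0⟩
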